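/- Let (τ, d, ρ) be a locally compact rooted real tree. Then the set 𝓘 of points lying on some infinite line of descent is empty if and only if τ is compact. Moreover, when τ is non-compact, 𝓘 is a closed connected subset of τ containing the root. -/

import Mathlib

open Set

/-- `φ` is a geodesic from `x` to `y`, parametrized by `[0, dist x y]`. -/
def IsGeodesicPath {T : Type*} [MetricSpace T] (x y : T) (φ : ℝ → T) : Prop :=
  φ 0 = x ∧ φ (dist x y) = y ∧
    ∀ s ∈ Icc 0 (dist x y), ∀ t ∈ Icc 0 (dist x y), dist (φ s) (φ t) = |s - t|

/-- A real tree: a complete metric space with existence and uniqueness of geodesics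
and no loops. -/
def IsRealTree (T : Type*) [MetricSpace T] : Prop :=
  CompleteSpace T ∧
  (∀ x y : T, ∃ φ : ℝ → T, IsGeodesicPath x y φ) ∧
  (∀ (x y : T) (φ ψ : ℝ → T), IsGeodesicPath x y φ → IsGeodesicPath x y ψ →
    ∀ t ∈ Icc 0 (dist x y), φ t = ψ t) ∧
  (∀ (x y : T) (γ : ℝ → T), ContinuousOn γ (Icc 0 1) → InjOn γ (Icc 0 1) →
    γ 0 = x → γ 1 = y → ∀ φ : ℝ → T, IsGeodesicPath x y φ →
      γ '' Icc 0 1 = φ '' Icc 0 (dist x y))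

/-- An infinite line of descent from the point of view of the root `ρ`: an isometric ray
`φ : [0,∞) → T` along which the distance to the root increases. -/
def IsInfLineOfDescent {T : Type*} [MetricSpace T] (ρ : T) (φ : ℝ → T) : Prop :=
  (∀ s ∈ Ici (0:ℝ), ∀ t ∈ Ici (0:ℝ), dist (φ s) (φ t) = |s - t|) ∧
  StrictMonoOn (fun t => dist ρ (φ t)) (Ici 0)

/-- The set of points having an infinite line of descent. -/
def infDescentSet (T : Type*) [MetricSpace T] (ρ : T) : Set T :=
  {σ | ∃ φ : ℝ → T, IsInfLineOfDescent ρ φ ∧ σ ∈ φ '' Ici 0}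

open Filter Topology

section Aux
variable {T : Type*} [MetricSpace T]

/-- A geodesic ray emanating from the root. -/
def IsRootRay (ρ : T) (ψ : ℝ → T) : Prop :=
  ψ 0 = ρ ∧ ∀ s ∈ Ici (0:ℝ), ∀ t ∈ Ici (0:ℝ), dist (ψ s) (ψ t) = |s - t|

lemma IsRootRay.dist_root {ρ : T} {ψ : ℝ → T} (h : IsRootRay ρ ψ) {t : ℝ} (ht : 0 ≤ t) :
    dist ρ (ψ t) = t := by
  have h2 := h.2 0 self_mem_Ici t ht
  rw [h.1] at h2
  rw [h2, abs_of_nonpos (by linarith)]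
  ring

lemma IsRootRay.isInfLineOfDescent {ρ : T} {ψ : ℝ → T} (h : IsRootRay ρ ψ) :
    IsInfLineOfDescent ρ ψ := by
  refine ⟨h.2, fun s hs t ht hst => ?_⟩
  simp only [h.dist_root hs, h.dist_root ht, hst]

lemma IsRootRay.continuousOn {ρ : T} {ψ : ℝ → T} (h : IsRootRay ρ ψ) :
    ContinuousOn ψ (Ici 0) := by
  have hl : LipschitzOnWith 1 ψ (Ici 0) := by
    intro s hs t ht
    rw [edist_dist, edist_dist, h.2 s hs t ht]
    simp [Real.dist_eq]
  exact hl.continuousOn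

/-- Ultrafilter limit of a sequence of (eventual) isometric rays. -/
lemma exists_ray_limit [ProperSpace T] [Nonempty T] (ρ : T) (g : ℕ → ℝ → T) (C : ℝ)
    (hb : ∀ n, ∀ t : ℝ, 0 ≤ t → dist ρ (g n t) ≤ C + t)
    (hiso : ∀ s : ℝ, 0 ≤ s → ∀ t : ℝ, 0 ≤ t →
      ∀ᶠ n in atTop, dist (g n s) (g n t) = |s - t|) :
    ∃ φ : ℝ → T,
      (∀ s ∈ Ici (0:ℝ), ∀ t ∈ Ici (0:ℝ), dist (φ s) (φ t) = |s - t|) ∧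
      ∀ t : ℝ, 0 ≤ t → Tendsto (fun n => g n t) (Filter.hyperfilter ℕ) (𝓝 (φ t)) := by
  have key : ∀ t : ℝ, ∃ a : T, Tendsto (fun n => g n (max t 0)) (Filter.hyperfilter ℕ) (𝓝 a) := by
    intro t
    have hc : IsCompact (Metric.closedBall ρ (C + max t 0)) := isCompact_closedBall _ _
    have hmem : ↑((Filter.hyperfilter ℕ).map (fun n => g n (max t 0))) ≤
        Filter.principal (Metric.closedBall ρ (C + max t 0)) := by
      rw [Ultrafilter.coe_map, Filter.le_principal_iff, Filter.mem_map]
      have : ∀ n, g n (max t 0) ∈ Metric.closedBall ρ (C + max t 0) := fun n =>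
        Metric.mem_closedBall'.2 (hb n _ (le_max_right _ _))
      exact Filter.univ_mem' this
    obtain ⟨a, _, ha⟩ := hc.ultrafilter_le_nhds _ hmem
    rw [Ultrafilter.coe_map] at ha
    exact ⟨a, ha⟩
  choose φ hφ using key
  have hφ' : ∀ t : ℝ, 0 ≤ t → Tendsto (fun n => g n t) (Filter.hyperfilter ℕ) (𝓝 (φ t)) := by
    intro t ht
    have := hφ t
    rwa [max_eq_left ht] at this
  refine ⟨φ, fun s hs t ht => ?_, hφ'⟩
  have h1 : Tendsto (fun n => dist (g n s) (g n t)) (Filter.hyperfilter ℕ)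
      (𝓝 (dist (φ s) (φ t))) := (hφ' s hs).dist (hφ' t ht)
  have h2 : Tendsto (fun n => dist (g n s) (g n t)) (Filter.hyperfilter ℕ) (𝓝 |s - t|) := by
    refine Tendsto.congr' ?_ tendsto_const_nhds
    exact ((hiso s hs t ht).filter_mono Nat.hyperfilter_le_atTop).mono fun n hn => hn.symm
  exact tendsto_nhds_unique h1 h2

end Aux

section Key
variable {T : Type*} [MetricSpace T]

lemma geodesic_continuousOn {x y : T} {γ : ℝ → T} (h : IsGeodesicPath x y γ) :
    ContinuousOn γ (Icc 0 (dist x y)) := by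
  have hl : LipschitzOnWith 1 γ (Icc 0 (dist x y)) := by
    intro s hs t ht
    rw [edist_dist, edist_dist, h.2.2 s hs t ht]
    simp [Real.dist_eq]
  exact hl.continuousOn

/-- Key lemma: along an infinite line of descent, the distance to the root grows linearly. -/
lemma IsInfLineOfDescent.dist_root_add (htree : IsRealTree T) {ρ : T} {φ : ℝ → T}
    (hφ : IsInfLineOfDescent ρ φ) {t : ℝ} (ht : 0 ≤ t) :
    dist ρ (φ t) = dist ρ (φ 0) + t := by
  obtain ⟨hiso, hmono⟩ := hφ
  rcases ht.eq_or_lt with h0 | htpos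
  · rw [← h0]; ring
  have hφ0t : dist (φ 0) (φ t) = t := by
    have h := hiso 0 self_mem_Ici t ht
    rwa [zero_sub, abs_neg, abs_of_nonneg ht] at h
  set r := dist ρ (φ 0) with hr
  have hr0 : (0:ℝ) ≤ r := dist_nonneg
  rcases hr0.eq_or_lt with hre | hrpos
  · have hρ : ρ = φ 0 := dist_eq_zero.1 hre.symm
    rw [hρ, hφ0t, ← hre]; ring
  obtain ⟨γ, hγ⟩ := htree.2.1 ρ (φ 0)
  set c := r + t with hc
  have hcpos : (0:ℝ) < c := by positivity
  set γ' : ℝ → T := fun u => γ (max 0 (min u r)) with hγ'def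
  set φ' : ℝ → T := fun u => φ (max 0 u) with hφ'def
  have hγ'cont : Continuous γ' := by
    refine (geodesic_continuousOn hγ).comp_continuous ?_ ?_
    · exact continuous_const.max (continuous_id.min continuous_const)
    · intro u
      rw [← hr]
      exact ⟨le_max_left _ _, max_le hr0 (min_le_right _ _)⟩
  have hφcont : ContinuousOn φ (Ici 0) := by
    have hl : LipschitzOnWith 1 φ (Ici 0) := by
      intro s hs t' ht'
      rw [edist_dist, edist_dist, hiso s hs t' ht']
      simp [Real.dist_eq]
    exact hl.continuousOn
  have hφ'cont : Continuous φ' := by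
    refine hφcont.comp_continuous (continuous_const.max continuous_id) fun u => mem_Ici.2 (le_max_left _ _)
  set path : ℝ → T := fun u => if u * c ≤ r then γ' (u * c) else φ' (u * c - r) with hpathdef
  -- values of the clamped pieces on the relevant ranges
  have hγ'val : ∀ a : ℝ, 0 ≤ a → a ≤ r → γ' a = γ a := by
    intro a h1 h2
    simp only [hγ'def, min_eq_left h2, max_eq_right h1]
  have hφ'val : ∀ b : ℝ, 0 ≤ b → φ' b = φ b := by
    intro b h1
    simp only [hφ'def, max_eq_right h1]
  have hγr : γ r = φ 0 := by rw [hr]; exact hγ.2.1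
  have hcont : Continuous path := by
    refine Continuous.if_le (hγ'cont.comp (continuous_mul_right c))
      ((hφ'cont.comp ((continuous_mul_right c).sub continuous_const))) (continuous_mul_right c)
      continuous_const ?_
    intro u hu
    show γ' (u * c) = φ' (u * c - r)
    rw [hu, hγ'val r hr0 le_rfl, hγr, sub_self, hφ'val 0 le_rfl]
  have path0 : path 0 = ρ := by
    have : (0:ℝ) * c ≤ r := by rw [zero_mul]; exact hr0
    simp only [hpathdef, if_pos this, zero_mul, hγ'val 0 le_rfl hr0, hγ.1]
  have path1 : path 1 = φ t := by
    have h1 : ¬ (1 * c ≤ r) := by rw [one_mul, hc]; linarith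
    simp only [hpathdef, if_neg h1, one_mul, hc, add_sub_cancel_left, hφ'val t ht,
      if_neg (not_le.2 (by linarith : r < r + t))]
  have hdistργ : ∀ a : ℝ, 0 ≤ a → a ≤ r → dist ρ (γ a) = a := by
    intro a h1 h2
    have := hγ.2.2 0 ⟨le_rfl, dist_nonneg⟩ a ⟨h1, by rwa [← hr]⟩
    rw [hγ.1] at this
    rw [this, zero_sub, abs_neg, abs_of_nonneg h1]
  have hmix : ∀ a b : ℝ, 0 ≤ a → a ≤ r → 0 < b → γ a ≠ φ b := by
    intro a b h1 h2 h3 heq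
    have hlt : dist ρ (φ 0) < dist ρ (φ b) := hmono self_mem_Ici (le_of_lt h3) h3
    rw [← heq, hdistργ a h1 h2, ← hr] at hlt
    linarith
  have hinj : InjOn path (Icc 0 1) := by
    intro u hu v hv huv
    have hu0 : 0 ≤ u * c := mul_nonneg hu.1 hcpos.le
    have hv0 : 0 ≤ v * c := mul_nonneg hv.1 hcpos.le
    have huvc : u * c = v * c → u = v := fun h => mul_right_cancel₀ hcpos.ne' h
    by_cases h1 : u * c ≤ r <;> by_cases h2 : v * c ≤ r <;>
      simp only [hpathdef, if_pos, if_neg, h1, h2, if_true, if_false] at huv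
    · rw [hγ'val _ hu0 h1, hγ'val _ hv0 h2] at huv
      apply huvc
      have := hγ.2.2 (u*c) ⟨hu0, by rwa [← hr]⟩ (v*c) ⟨hv0, by rwa [← hr]⟩
      rw [huv, dist_self] at this
      have := abs_eq_zero.1 this.symm
      linarith
    · push_neg at h2
      rw [hγ'val _ hu0 h1, hφ'val _ (by linarith)] at huv
      exact absurd huv (hmix _ _ hu0 h1 (by linarith))
    · push_neg at h1
      rw [hγ'val _ hv0 h2, hφ'val _ (by linarith)] at huv
      exact absurd huv.symm (hmix _ _ hv0 h2 (by linarith))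
    · push_neg at h1 h2
      rw [hφ'val _ (by linarith), hφ'val _ (by linarith)] at huv
      apply huvc
      have := hiso (u*c - r) (by simp; linarith) (v*c - r) (by simp; linarith)
      rw [huv, dist_self] at this
      have := abs_eq_zero.1 this.symm
      linarith
  obtain ⟨ψ, hψ⟩ := htree.2.1 ρ (φ t)
  have himg := htree.2.2.2 ρ (φ t) path hcont.continuousOn hinj path0 path1 ψ hψ
  have hmem : φ 0 ∈ path '' Icc 0 1 := by
    refine ⟨r / c, ⟨by positivity, (div_le_one hcpos).2 (by linarith)⟩, ?_⟩
    have hrc : r / c * c = r := div_mul_cancel₀ _ hcpos.ne'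
    simp only [hpathdef, hrc, if_pos le_rfl, hγ'val r hr0 le_rfl, hγr]
  rw [himg] at hmem
  obtain ⟨a, ⟨ha0, haD⟩, hae⟩ := hmem
  have har : dist ρ (φ 0) = a := by
    have h := hψ.2.2 0 ⟨le_rfl, dist_nonneg⟩ a ⟨ha0, haD⟩
    rw [hψ.1, hae, zero_sub, abs_neg, abs_of_nonneg ha0] at h
    exact h
  have hDrt := hψ.2.2 a ⟨ha0, haD⟩ (dist ρ (φ t)) ⟨dist_nonneg, le_rfl⟩
  rw [hψ.2.1, hae, hφ0t, abs_of_nonpos (by linarith)] at hDrt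
  rw [hc, hr]
  linarith

end Key

section Ext
variable {T : Type*} [MetricSpace T]

lemma IsInfLineOfDescent.shift {ρ : T} {φ : ℝ → T} (h : IsInfLineOfDescent ρ φ) {a : ℝ}
    (ha : 0 ≤ a) : IsInfLineOfDescent ρ (fun t => φ (t + a)) := by
  constructor
  · intro s hs t ht
    rw [h.1 (s + a) (by simp only [mem_Ici] at *; linarith)
      (t + a) (by simp only [mem_Ici] at *; linarith)]
    congr 1
    ring
  · intro s hs t ht hst
    exact h.2 (by simp only [mem_Ici] at *; linarith) (by simp only [mem_Ici] at *; linarith)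
      (by linarith)

/-- Every point with an infinite line of descent lies on a geodesic ray from the root. -/
lemma mem_infDescentSet_iff_rootRay (htree : IsRealTree T) (ρ σ : T) :
    σ ∈ infDescentSet T ρ ↔ ∃ ψ : ℝ → T, IsRootRay ρ ψ ∧ σ ∈ ψ '' Ici 0 := by
  constructor
  · rintro ⟨φ, hφ, s₀, hs₀, rfl⟩
    simp only [mem_Ici] at hs₀
    set φ₁ : ℝ → T := fun t => φ (t + s₀) with hφ₁def
    have hφ₁ : IsInfLineOfDescent ρ φ₁ := hφ.shift hs₀
    have hφ₁0 : φ₁ 0 = φ s₀ := by rw [hφ₁def]; simp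
    set r := dist ρ (φ₁ 0) with hrdef
    have hr0 : (0:ℝ) ≤ r := dist_nonneg
    have key : ∀ b : ℝ, 0 ≤ b → dist ρ (φ₁ b) = r + b := fun b hb =>
      hφ₁.dist_root_add htree hb
    obtain ⟨γ, hγ⟩ := htree.2.1 ρ (φ₁ 0)
    have hγdist : ∀ a : ℝ, 0 ≤ a → a ≤ r → dist ρ (γ a) = a := by
      intro a h1 h2
      have h := hγ.2.2 0 ⟨le_rfl, dist_nonneg⟩ a ⟨h1, by rwa [← hrdef]⟩
      rw [hγ.1, zero_sub, abs_neg, abs_of_nonneg h1] at h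
      exact h
    have hγr : γ r = φ₁ 0 := by rw [hrdef]; exact hγ.2.1
    set ψ : ℝ → T := fun u => if u ≤ r then γ u else φ₁ (u - r) with hψdef
    have hmix : ∀ s t' : ℝ, 0 ≤ s → s ≤ r → r < t' → dist (γ s) (φ₁ (t' - r)) = t' - s := by
      intro s t' hs h1 h2
      apply le_antisymm
      · have d1 : dist (γ s) (φ₁ 0) = r - s := by
          have h := hγ.2.2 s ⟨hs, by rwa [← hrdef]⟩ (dist ρ (φ₁ 0)) ⟨dist_nonneg, le_rfl⟩
          rw [hγ.2.1, ← hrdef, abs_of_nonpos (by linarith)] at h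
          rw [h]; ring
        have d2 : dist (φ₁ 0) (φ₁ (t' - r)) = t' - r := by
          have h := hφ₁.1 0 self_mem_Ici (t' - r) (by simp only [mem_Ici]; linarith)
          rw [zero_sub, abs_neg, abs_of_nonneg (by linarith : (0:ℝ) ≤ t' - r)] at h
          exact h
        calc dist (γ s) (φ₁ (t' - r)) ≤ dist (γ s) (φ₁ 0) + dist (φ₁ 0) (φ₁ (t' - r)) :=
              dist_triangle _ _ _
          _ = t' - s := by rw [d1, d2]; ring
      · have d3 : dist ρ (φ₁ (t' - r)) = t' := by
          rw [key (t' - r) (by linarith)]; ring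
        have d4 := dist_triangle ρ (γ s) (φ₁ (t' - r))
        rw [d3, hγdist s hs h1] at d4
        linarith
    have hψiso : ∀ s ∈ Ici (0:ℝ), ∀ t' ∈ Ici (0:ℝ), dist (ψ s) (ψ t') = |s - t'| := by
      intro s hs t' ht'
      simp only [mem_Ici] at hs ht'
      by_cases h1 : s ≤ r <;> by_cases h2 : t' ≤ r <;>
        simp only [hψdef, h1, h2, if_true, if_false, if_pos, if_neg]
      · exact hγ.2.2 s ⟨hs, by rwa [← hrdef]⟩ t' ⟨ht', by rwa [← hrdef]⟩
      · push_neg at h2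
        rw [hmix s t' hs h1 h2, abs_of_nonpos (by linarith)]
        ring
      · push_neg at h1
        rw [dist_comm, hmix t' s ht' h2 h1, abs_of_nonneg (by linarith)]
      · push_neg at h1 h2
        have h := hφ₁.1 (s - r) (by simp only [mem_Ici]; linarith)
          (t' - r) (by simp only [mem_Ici]; linarith)
        rw [h]
        congr 1
        ring
    have hψ0 : ψ 0 = ρ := by
      simp only [hψdef, if_pos hr0]
      exact hγ.1
    refine ⟨ψ, ⟨hψ0, hψiso⟩, r, hr0, ?_⟩
    simp only [hψdef, if_pos le_rfl, hγr, hφ₁0]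
  · rintro ⟨ψ, hψ, hmem⟩
    exact ⟨ψ, hψ.isInfLineOfDescent, hmem⟩

lemma exists_rootRay_of_noncompact [ProperSpace T] [Nonempty T] (htree : IsRealTree T) (ρ : T)
    (h : ¬ IsCompact (univ : Set T)) : ∃ ψ : ℝ → T, IsRootRay ρ ψ := by
  have hub : ∀ C : ℝ, ∃ x : T, C < dist ρ x := by
    by_contra hc
    push_neg at hc
    obtain ⟨C, hC⟩ := hc
    exact h ((isCompact_closedBall ρ C).of_isClosed_subset isClosed_univ
      (fun x _ => Metric.mem_closedBall'.2 (hC x)))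
  choose x hx using fun n : ℕ => hub n
  choose γf hγf using fun n => htree.2.1 ρ (x n)
  set d : ℕ → ℝ := fun n => dist ρ (x n) with hddef
  have hd0 : ∀ n, (0:ℝ) ≤ d n := fun n => dist_nonneg
  set g : ℕ → ℝ → T := fun n t => γf n (min t (d n)) with hgdef
  have hb : ∀ n, ∀ t : ℝ, 0 ≤ t → dist ρ (g n t) ≤ 0 + t := by
    intro n t ht
    have hmem : min t (d n) ∈ Icc 0 (dist ρ (x n)) :=
      ⟨le_min ht (hd0 n), min_le_right _ _⟩
    have h := (hγf n).2.2 0 ⟨le_rfl, dist_nonneg⟩ (min t (d n)) hmem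
    rw [(hγf n).1, zero_sub, abs_neg, abs_of_nonneg hmem.1] at h
    simp only [hgdef]
    rw [h, zero_add]
    exact min_le_left _ _
  have hiso : ∀ s : ℝ, 0 ≤ s → ∀ t : ℝ, 0 ≤ t →
      ∀ᶠ n in Filter.atTop, dist (g n s) (g n t) = |s - t| := by
    intro s hs t ht
    refine Filter.eventually_atTop.2 ⟨⌈max s t⌉₊, fun n hn => ?_⟩
    have hle : max s t ≤ (n : ℝ) := Nat.ceil_le.1 hn
    have hdn : max s t ≤ d n := hle.trans (le_of_lt (hx n))
    have hsd : s ≤ d n := (le_max_left s t).trans hdn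
    have htd : t ≤ d n := (le_max_right s t).trans hdn
    simp only [hgdef, min_eq_left hsd, min_eq_left htd]
    exact (hγf n).2.2 s ⟨hs, hsd⟩ t ⟨ht, htd⟩
  obtain ⟨φ, hisoφ, htend⟩ := exists_ray_limit ρ g 0 hb hiso
  have hg0 : ∀ n, g n 0 = ρ := by
    intro n
    simp only [hgdef, min_eq_left (hd0 n), (hγf n).1]
  have hφ0 : φ 0 = ρ := by
    have h1 := htend 0 le_rfl
    have h2 : Filter.Tendsto (fun n => g n 0) (Filter.hyperfilter ℕ) (𝓝 ρ) := by
      simp only [hg0]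
      exact tendsto_const_nhds
    exact tendsto_nhds_unique h1 h2
  exact ⟨φ, hφ0, hisoφ⟩

end Ext

/-- In a locally compact (boundedly compact) rooted real tree, the set `𝓘` of points lying
on some infinite line of descent is empty iff the tree is compact; when the tree is
non-compact, `𝓘` is a closed connected subset containing the root. -/
theorem infDescentSet_empty_iff_compact (T : Type*) [MetricSpace T] [Nonempty T]
    (htree : IsRealTree T) (hproper : ProperSpace T) (ρ : T) :
    (infDescentSet T ρ = ∅ ↔ IsCompact (univ : Set T)) ∧
    (¬ IsCompact (univ : Set T) →
      IsClosed (infDescentSet T ρ) ∧ IsConnected (infDescentSet T ρ) ∧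
        ρ ∈ infDescentSet T ρ) := by
  constructor
  · constructor
    · intro hempty
      by_contra hnc
      obtain ⟨ψ, hψ⟩ := exists_rootRay_of_noncompact htree ρ hnc
      have hρ : ρ ∈ infDescentSet T ρ :=
        ⟨ψ, hψ.isInfLineOfDescent, 0, self_mem_Ici, hψ.1⟩
      rw [hempty] at hρ
      exact hρ
    · intro hcpt
      ext σ
      simp only [mem_empty_iff_false, iff_false]
      rintro ⟨φ, hφ, -⟩
      obtain ⟨C, hC⟩ := Metric.isBounded_iff.1 hcpt.isBounded
      set M : ℝ := (⌈C⌉₊ : ℝ) + 1 with hM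
      have hM0 : (0:ℝ) ≤ M := by positivity
      have h1 := hφ.1 0 self_mem_Ici M (mem_Ici.2 hM0)
      rw [zero_sub, abs_neg, abs_of_nonneg hM0] at h1
      have h2 := hC (mem_univ (φ 0)) (mem_univ (φ M))
      have h3 : C < M := by
        have := Nat.le_ceil C
        rw [hM]
        linarith
      rw [h1] at h2
      linarith
  · intro hnc
    obtain ⟨ψ₀, hψ₀⟩ := exists_rootRay_of_noncompact htree ρ hnc
    have hρ : ρ ∈ infDescentSet T ρ :=
      ⟨ψ₀, hψ₀.isInfLineOfDescent, 0, self_mem_Ici, hψ₀.1⟩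
    refine ⟨?_, ⟨⟨ρ, hρ⟩, ?_⟩, hρ⟩
    · -- closedness
      refine IsSeqClosed.isClosed ?_
      intro σs σ hmem htends
      have hrays : ∀ n, ∃ ψ, IsRootRay ρ ψ ∧ σs n ∈ ψ '' Ici 0 := fun n =>
        (mem_infDescentSet_iff_rootRay htree ρ (σs n)).1 (hmem n)
      choose ψs hψs hmemn using hrays
      simp only [mem_image, mem_Ici] at hmemn
      choose u hu hueq using hmemn
      have hb : ∀ n, ∀ t : ℝ, 0 ≤ t → dist ρ (ψs n t) ≤ 0 + t := by
        intro n t ht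
        rw [(hψs n).dist_root ht, zero_add]
      have hiso' : ∀ s : ℝ, 0 ≤ s → ∀ t : ℝ, 0 ≤ t →
          ∀ᶠ n in Filter.atTop, dist (ψs n s) (ψs n t) = |s - t| := fun s hs t ht =>
        Filter.Eventually.of_forall fun n => (hψs n).2 s (mem_Ici.2 hs) t (mem_Ici.2 ht)
      obtain ⟨φ, hisoφ, htend⟩ := exists_ray_limit ρ (fun n => ψs n) 0 hb hiso'
      have hφ0 : φ 0 = ρ := by
        refine tendsto_nhds_unique (htend 0 le_rfl) ?_
        have hconst : ∀ n, ψs n 0 = ρ := fun n => (hψs n).1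
        simp only [hconst]
        exact tendsto_const_nhds
      set s := dist ρ σ with hsdef
      have hs0 : (0:ℝ) ≤ s := dist_nonneg
      have hun : ∀ n, u n = dist ρ (σs n) := fun n => by
        rw [← hueq n, (hψs n).dist_root (hu n)]
      have hA : Filter.Tendsto (fun n => dist (ψs n s) (σs n)) (Filter.hyperfilter ℕ)
          (𝓝 (dist (φ s) σ)) :=
        (htend s hs0).dist (htends.mono_left Nat.hyperfilter_le_atTop)
      have hB : ∀ n, dist (ψs n s) (σs n) = |s - dist ρ (σs n)| := by
        intro n
        rw [← hun n]
        conv_lhs => rw [← hueq n]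
        exact (hψs n).2 s (mem_Ici.2 hs0) (u n) (mem_Ici.2 (hu n))
      have hCtend : Filter.Tendsto (fun n => |s - dist ρ (σs n)|) Filter.atTop (𝓝 0) := by
        have h1 : Filter.Tendsto (fun n => dist ρ (σs n)) Filter.atTop (𝓝 s) :=
          Filter.Tendsto.dist tendsto_const_nhds htends
        have h2 : Filter.Tendsto (fun n => s - dist ρ (σs n)) Filter.atTop (𝓝 (s - s)) :=
          Filter.Tendsto.sub tendsto_const_nhds h1
        rw [sub_self] at h2
        have h3 := h2.abs
        rwa [abs_zero] at h3
      have hD : Filter.Tendsto (fun n => dist (ψs n s) (σs n)) (Filter.hyperfilter ℕ) (𝓝 0) := by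
        simp only [hB]
        exact hCtend.mono_left Nat.hyperfilter_le_atTop
      have hfs : φ s = σ := by
        have := tendsto_nhds_unique hA hD
        exact dist_eq_zero.1 this
      exact (mem_infDescentSet_iff_rootRay htree ρ σ).2
        ⟨φ, ⟨hφ0, hisoφ⟩, s, mem_Ici.2 hs0, hfs⟩
    · -- preconnectedness
      refine isPreconnected_of_forall ρ ?_
      intro y hy
      obtain ⟨ψ, hψ, hyim⟩ := (mem_infDescentSet_iff_rootRay htree ρ y).1 hy
      refine ⟨ψ '' Ici 0, ?_, ⟨0, self_mem_Ici, hψ.1⟩, hyim, ?_⟩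
      · rintro z ⟨v, hv, rfl⟩
        exact ⟨ψ, hψ.isInfLineOfDescent, v, hv, rfl⟩
      · exact isPreconnected_Ici.image ψ hψ.continuousOn
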